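/- arXiv:1701.02302 — 2 statements merged into one kernel-verified Lean document; each statement's English description precedes it below -/
import Mathlib

section
/- Let n ≥ 1 and let C be a class of functions [n] → [2] with C nonempty and C not equal to the class of all functions [n] → [2]. Then C has at least one extenture, and (max{k ∈ ℕ : C shatters every subset U ⊆ [n] with |U| = k}) + 1 = min{|dom(𝕡f)| : 𝕡f is an extenture of C}. (The VC radius of C equals the minimum domain size of an extenture of C minus one.) -/
/-- A total function `f : Fin n → Fin 2` extends the partial function `pf`. -/
def ExtendsPF {n : ℕ} (f : Fin n → Fin 2) (pf : Fin n → Option (Fin 2)) : Prop :=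
  ∀ u i, pf u = some i → f u = i

/-- `pf` is an extenture of `C`: no member of `C` extends `pf`, but every proper
restriction of `pf` has an extension in `C`. -/
def IsExtenture {n : ℕ} (C : Set (Fin n → Fin 2)) (pf : Fin n → Option (Fin 2)) : Prop :=
  (¬ ∃ f ∈ C, ExtendsPF f pf) ∧
  ∀ pg : Fin n → Option (Fin 2),
    (∀ u i, pg u = some i → pf u = some i) → pg ≠ pf → ∃ f ∈ C, ExtendsPF f pg

/-- `C` shatters `U`: every assignment of values on `U` is realized by a member of `C`. -/
def Shatters {n : ℕ} (C : Set (Fin n → Fin 2)) (U : Finset (Fin n)) : Prop :=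
  ∀ g : Fin n → Fin 2, ∃ f ∈ C, ∀ u ∈ U, f u = g u

/-- The size of the domain of a partial function. -/
def domCard {n : ℕ} (pf : Fin n → Option (Fin 2)) : ℕ :=
  (Finset.univ.filter (fun u => (pf u).isSome = true)).card

/-- For a nonempty proper class `C ⊆ [n → 2]`, extentures exist and the VC radius of `C`
(the largest `k` such that every subset of size `k` is shattered) equals the minimum
domain size of an extenture of `C`, minus one. -/
theorem vc_radius_eq_min_extenture_size_sub_one {n : ℕ} (hn : 1 ≤ n)
    (C : Set (Fin n → Fin 2)) (hne : C.Nonempty) (hproper : C ≠ Set.univ) :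
    (∃ pf : Fin n → Option (Fin 2), IsExtenture C pf) ∧
    sSup {k : ℕ | (∃ U : Finset (Fin n), U.card = k) ∧
        ∀ U : Finset (Fin n), U.card = k → Shatters C U} + 1
      = sInf {k : ℕ | ∃ pf : Fin n → Option (Fin 2), IsExtenture C pf ∧ domCard pf = k} := by
  classical
  obtain ⟨g0, hg0⟩ : ∃ g, g ∉ C := by
    by_contra h; push_neg at h; exact hproper (Set.eq_univ_iff_forall.mpr h)
  set N : Set ℕ :=
    {k | ∃ pf : Fin n → Option (Fin 2), (¬ ∃ f ∈ C, ExtendsPF f pf) ∧ domCard pf = k} with hN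
  have hNne : N.Nonempty := by
    refine ⟨domCard (fun u => some (g0 u)), fun u => some (g0 u), ?_, rfl⟩
    rintro ⟨f, hf, hext⟩
    have : f = g0 := funext fun u => hext u (g0 u) rfl
    exact hg0 (this ▸ hf)
  set m := sInf N with hm
  obtain ⟨pf0, hpf0, hpf0c⟩ : ∃ pf : Fin n → Option (Fin 2),
      (¬ ∃ f ∈ C, ExtendsPF f pf) ∧ domCard pf = m := Nat.sInf_mem hNne
  have hext_small : ∀ pf : Fin n → Option (Fin 2), domCard pf < m → ∃ f ∈ C, ExtendsPF f pf := by
    intro pf h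
    by_contra hno
    exact absurd (Nat.sInf_le (show domCard pf ∈ N from ⟨pf, hno, rfl⟩)) (not_le.mpr h)
  have hdomlt : ∀ pg : Fin n → Option (Fin 2),
      (∀ u i, pg u = some i → pf0 u = some i) → pg ≠ pf0 → domCard pg < domCard pf0 := by
    intro pg hsub hne'
    apply Finset.card_lt_card
    constructor
    · intro u hu
      simp only [Finset.mem_filter, Finset.mem_univ, true_and] at hu ⊢
      obtain ⟨i, hi⟩ := Option.isSome_iff_exists.mp hu
      rw [hsub u i hi]; rfl
    · intro hsup
      apply hne'; funext u
      by_cases h : (pg u).isSome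
      · obtain ⟨i, hi⟩ := Option.isSome_iff_exists.mp h
        rw [hi, hsub u i hi]
      · cases hpf : pf0 u with
        | none => rw [Option.not_isSome_iff_eq_none.mp h]
        | some i =>
          have hu : u ∈ Finset.univ.filter (fun u => (pf0 u).isSome = true) :=
            Finset.mem_filter.mpr ⟨Finset.mem_univ u, by simp [hpf]⟩
          have := hsup hu
          simp only [Finset.mem_filter] at this
          exact absurd this.2 h
  have hExt0 : IsExtenture C pf0 :=
    ⟨hpf0, fun pg hsub hne' => hext_small pg (hpf0c ▸ hdomlt pg hsub hne')⟩
  have hm_pos : 1 ≤ m := by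
    by_contra h
    have h0 : m = 0 := by omega
    obtain ⟨f, hf⟩ := hne
    apply hpf0
    refine ⟨f, hf, fun u i hi => ?_⟩
    exfalso
    have hdc : domCard pf0 = 0 := hpf0c.trans h0
    have hemp := Finset.card_eq_zero.mp hdc
    have hu : u ∈ Finset.univ.filter (fun u => (pf0 u).isSome = true) :=
      Finset.mem_filter.mpr ⟨Finset.mem_univ u, by simp [hi]⟩
    rw [hemp] at hu
    exact absurd hu (Finset.notMem_empty u)
  have hm_le_n : m ≤ n := by
    rw [← hpf0c]
    calc domCard pf0 ≤ Finset.univ.card := Finset.card_filter_le _ _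
    _ = n := by simp
  -- the extenture-size set
  have hEeq : sInf {k : ℕ | ∃ pf : Fin n → Option (Fin 2), IsExtenture C pf ∧ domCard pf = k}
      = m := by
    apply le_antisymm
    · exact Nat.sInf_le (show m ∈ {k : ℕ | ∃ pf : Fin n → Option (Fin 2),
        IsExtenture C pf ∧ domCard pf = k} from ⟨pf0, hExt0, hpf0c⟩)
    · have hEne : {k : ℕ | ∃ pf : Fin n → Option (Fin 2),
          IsExtenture C pf ∧ domCard pf = k}.Nonempty := ⟨m, pf0, hExt0, hpf0c⟩
      obtain ⟨pf1, h1, h1c⟩ : ∃ pf : Fin n → Option (Fin 2), IsExtenture C pf ∧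
          domCard pf = sInf {k : ℕ | ∃ pf : Fin n → Option (Fin 2),
            IsExtenture C pf ∧ domCard pf = k} := Nat.sInf_mem hEne
      exact h1c ▸ Nat.sInf_le (show domCard pf1 ∈ N from ⟨pf1, h1.1, rfl⟩)
  -- the shattering set equals Iic (m-1)
  have hKeq : {k : ℕ | (∃ U : Finset (Fin n), U.card = k) ∧
      ∀ U : Finset (Fin n), U.card = k → Shatters C U} = Set.Iic (m - 1) := by
    ext k
    simp only [Set.mem_setOf_eq, Set.mem_Iic]
    constructor
    · rintro ⟨⟨U0, hU0⟩, hshat⟩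
      by_contra h
      have hkm : m ≤ k := by omega
      have hkn : k ≤ n := by
        rw [← hU0]
        calc U0.card ≤ Finset.univ.card := Finset.card_le_card (Finset.subset_univ _)
        _ = n := by simp
      -- extend dom pf0 to a set of size k
      set D := Finset.univ.filter (fun u => (pf0 u).isSome = true) with hD
      have hDcard : D.card = m := hpf0c
      obtain ⟨U, hDU, hUcard⟩ : ∃ U, D ⊆ U ∧ U.card = k :=
        Finset.exists_superset_card_eq (by omega) (by simp [hkn])
      obtain ⟨f, hf, hfg⟩ := hshat U hUcard (fun u => (pf0 u).getD 0)
      apply hpf0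
      refine ⟨f, hf, fun u i hi => ?_⟩
      have hu : u ∈ D := Finset.mem_filter.mpr ⟨Finset.mem_univ u, by simp [hi]⟩
      rw [hfg u (hDU hu), hi, Option.getD_some]
    · intro hk
      have hkm : k < m := by omega
      have hkn : k ≤ n := by omega
      constructor
      · obtain ⟨U, _, hU⟩ := Finset.exists_subset_card_eq
          (s := (Finset.univ : Finset (Fin n))) (by simpa using hkn)
        exact ⟨U, hU⟩
      · intro U hU g
        set pg : Fin n → Option (Fin 2) := fun u => if u ∈ U then some (g u) else none with hpg
        have hpgc : domCard pg = k := by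
          rw [← hU]
          unfold domCard
          congr 1
          ext u
          by_cases h : u ∈ U <;> simp [hpg, h]
        obtain ⟨f, hf, hext⟩ := hext_small pg (hpgc ▸ hkm)
        refine ⟨f, hf, fun u hu => ?_⟩
        exact hext u (g u) (by simp [hpg, hu])
  refine ⟨⟨pf0, hExt0⟩, ?_⟩
  rw [hKeq, hEeq, csSup_Iic]
  omega
end

section
/- Let 𝕜 be a field, n ≥ 1, and let D be a full class of functions [n] → [m], i.e. for every u ∈ [n] and every v ∈ [m] some h ∈ D has h(u) = v. Fix f : [n] → [m] and let J = Ideal.span { ∏_{(u,i) : ¬(f(u) = i ∧ h(u) = i)} x_{u,i} : h ∈ D } ⊆ S (the canonical ideal of the partial class {f ∩ h : h ∈ D}). Then J is a principal ideal if and only if f ∈ D, and in that case J = Ideal.span {x^{Γf}}. -/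
open MvPolynomial

/-- The monomial `x^{Γf} = ∏_{(u,i) : f(u) ≠ i} x_{u,i}`. -/
noncomputable def xGamma (𝕜 : Type) [Field 𝕜] {n m : ℕ} (f : Fin n → Fin m) :
    MvPolynomial (Fin n × Fin m) 𝕜 :=
  ∏ p ∈ Finset.univ.filter (fun p : Fin n × Fin m => f p.1 ≠ p.2), X p

/-- The canonical ideal of the partial class `{f ∩ h : h ∈ D}`, generated by the
monomials `x^{Γ(f ∩ h)}`. -/
noncomputable def capIdeal (𝕜 : Type) [Field 𝕜] {n m : ℕ} (D : Set (Fin n → Fin m))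
    (f : Fin n → Fin m) : Ideal (MvPolynomial (Fin n × Fin m) 𝕜) :=
  Ideal.span {P | ∃ h ∈ D,
    P = ∏ p ∈ Finset.univ.filter
        (fun p : Fin n × Fin m => ¬(f p.1 = p.2 ∧ h p.1 = p.2)), X p}

/-- Indicator `Finsupp` of a finite set. -/
noncomputable def capInd {σ : Type*} (A : Finset σ) : σ →₀ ℕ := ∑ p ∈ A, Finsupp.single p 1

lemma capInd_apply {σ : Type*} [DecidableEq σ] (A : Finset σ) (q : σ) :
    capInd A q = if q ∈ A then 1 else 0 := by
  classical
  simp only [capInd, Finset.sum_apply', Finsupp.single_apply]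
  exact Finset.sum_ite_eq' A q (fun _ => 1)

lemma capProd_X_eq {𝕜 : Type} [Field 𝕜] {σ : Type*} (A : Finset σ) :
    (∏ p ∈ A, (X p : MvPolynomial σ 𝕜)) = monomial (capInd A) 1 := by
  classical
  induction A using Finset.induction with
  | empty => simp [capInd]
  | insert _ _ h ih =>
      rw [Finset.prod_insert h, ih,
        show (capInd (insert _ _)) = Finsupp.single _ 1 + capInd _ from Finset.sum_insert h,
        X, monomial_mul, one_mul]

/-- The lex-minimal exponent of a nonzero polynomial is below the exponent of any
monomial that the polynomial divides. -/
lemma capMin_exp_le {σ : Type*} [LinearOrder σ] {R : Type*} [CommRing R] [IsDomain R]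
    {P : MvPolynomial σ R} (hP : P ≠ 0) :
    ∃ t ∈ P.support, ∀ q : MvPolynomial σ R, ∀ s : σ →₀ ℕ,
      P * q = monomial s 1 → t ≤ s := by
  classical
  have hsupp : (P.support.image (toLex : (σ →₀ ℕ) → Lex (σ →₀ ℕ))).Nonempty :=
    (Finset.image_nonempty).2 (MvPolynomial.support_nonempty.2 hP)
  obtain ⟨t, ht, htt⟩ := Finset.mem_image.1 ((P.support.image toLex).min'_mem hsupp)
  have hmin : ∀ u ∈ P.support, toLex t ≤ toLex u := by
    intro u hu
    rw [htt]
    exact Finset.min'_le _ _ (Finset.mem_image_of_mem _ hu)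
  refine ⟨t, ht, ?_⟩
  intro q s hqs
  have hq : q ≠ 0 := by
    rintro rfl
    rw [mul_zero] at hqs
    exact one_ne_zero (monomial_eq_zero.1 hqs.symm)
  have hsuppq : (q.support.image (toLex : (σ →₀ ℕ) → Lex (σ →₀ ℕ))).Nonempty :=
    (Finset.image_nonempty).2 (MvPolynomial.support_nonempty.2 hq)
  obtain ⟨t', ht', htt'⟩ := Finset.mem_image.1 ((q.support.image toLex).min'_mem hsuppq)
  have hmin' : ∀ u ∈ q.support, toLex t' ≤ toLex u := by
    intro u hu
    rw [htt']
    exact Finset.min'_le _ _ (Finset.mem_image_of_mem _ hu)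
  have key : coeff (t + t') (P * q) = coeff t P * coeff t' q := by
    rw [coeff_mul]
    refine Finset.sum_eq_single_of_mem (t, t') (Finset.HasAntidiagonal.mem_antidiagonal.2 rfl) ?_
    rintro ⟨u, v⟩ huv hne
    by_contra h0
    have hu : u ∈ P.support := by
      rw [mem_support_iff]; intro h; exact h0 (by simp [h])
    have hv : v ∈ q.support := by
      rw [mem_support_iff]; intro h; exact h0 (by simp [h])
    have h1 : toLex t ≤ toLex u := hmin u hu
    have h2 : toLex t' ≤ toLex v := hmin' v hv
    have hsum : toLex u + toLex v = toLex t + toLex t' := by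
      have := Finset.HasAntidiagonal.mem_antidiagonal.1 huv
      exact congrArg toLex this
    have hut : toLex u = toLex t := by
      by_contra hne2
      have : toLex t + toLex t' < toLex u + toLex v :=
        add_lt_add_of_lt_of_le (lt_of_le_of_ne h1 (Ne.symm hne2)) h2
      exact absurd hsum (ne_of_gt this)
    have hvt : toLex v = toLex t' := by
      have := hsum
      rw [hut] at this
      exact add_left_cancel this
    exact hne (Prod.ext (toLex.injective hut) (toLex.injective hvt))
  have hne0 : coeff (t + t') (P * q) ≠ 0 := by
    rw [key]
    exact mul_ne_zero (mem_support_iff.1 ht) (mem_support_iff.1 ht')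
  rw [hqs, coeff_monomial] at hne0
  have : s = t + t' := by
    by_contra h; rw [if_neg h] at hne0; exact hne0 rfl
  rw [this]
  exact le_add_right le_rfl

/-- For a full class `D`, the canonical ideal of `{f ∩ h : h ∈ D}` is principal iff
`f ∈ D`, in which case it is generated by `x^{Γf}`. -/
theorem capIdeal_principal_iff_mem (𝕜 : Type) [Field 𝕜] {n m : ℕ} (hn : 1 ≤ n)
    (D : Set (Fin n → Fin m)) (hfull : ∀ u : Fin n, ∀ v : Fin m, ∃ h ∈ D, h u = v)
    (f : Fin n → Fin m) :
    ((capIdeal 𝕜 D f).IsPrincipal ↔ f ∈ D) ∧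
    (f ∈ D → capIdeal 𝕜 D f = Ideal.span {xGamma 𝕜 f}) := by
  classical
  set Gf : Finset (Fin n × Fin m) := Finset.univ.filter (fun p => f p.1 ≠ p.2) with hGf
  set E : (Fin n → Fin m) → Finset (Fin n × Fin m) :=
    fun h => Finset.univ.filter (fun p => ¬(f p.1 = p.2 ∧ h p.1 = p.2)) with hE
  have hxg : xGamma 𝕜 f = monomial (capInd Gf) 1 := capProd_X_eq _
  have hgen : ∀ h : Fin n → Fin m,
      (∏ p ∈ E h, (X p : MvPolynomial (Fin n × Fin m) 𝕜)) = monomial (capInd (E h)) 1 :=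
    fun h => capProd_X_eq _
  -- pointwise values
  have hGf_apply : ∀ p : Fin n × Fin m, capInd Gf p = if f p.1 = p.2 then 0 else 1 := by
    intro p
    rw [capInd_apply]
    by_cases hfp : f p.1 = p.2 <;> simp [hGf, hfp]
  have hE_apply : ∀ (h : Fin n → Fin m) (p : Fin n × Fin m),
      capInd (E h) p = if f p.1 = p.2 ∧ h p.1 = p.2 then 0 else 1 := by
    intro h p
    rw [capInd_apply]
    by_cases hfp : f p.1 = p.2 ∧ h p.1 = p.2 <;> simp [hE, hfp]
  -- rewrite the ideal as a monomial ideal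
  have hcap : capIdeal 𝕜 D f =
      Ideal.span ((fun s => monomial s (1 : 𝕜)) '' {s | ∃ h ∈ D, s = capInd (E h)}) := by
    unfold capIdeal
    congr 1
    ext P
    constructor
    · rintro ⟨h, hh, rfl⟩
      exact ⟨capInd (E h), ⟨h, hh, rfl⟩, (hgen h).symm⟩
    · rintro ⟨s, ⟨h, hh, rfl⟩, rfl⟩
      exact ⟨h, hh, (hgen h).symm⟩
  -- σf ≤ s_h for every h
  have hle1 : ∀ h : Fin n → Fin m, capInd Gf ≤ capInd (E h) := by
    intro h
    intro p
    rw [hGf_apply, hE_apply]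
    by_cases hfp : f p.1 = p.2
    · simp [hfp]
    · simp [hfp]
  -- if s_h ≤ t ≤ σf then h = f
  have hpinch : ∀ h : Fin n → Fin m, ∀ t : (Fin n × Fin m) →₀ ℕ,
      capInd (E h) ≤ t → t ≤ capInd Gf → h = f := by
    intro h t h1 h2
    funext u
    have h1p := h1 (u, f u)
    have h2p := h2 (u, f u)
    rw [hE_apply] at h1p
    rw [hGf_apply] at h2p
    rw [if_pos rfl] at h2p
    by_contra hne
    rw [if_neg (by simp [hne])] at h1p
    omega
  -- the second part : f ∈ D → capIdeal = span {xGamma}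
  have part2 : f ∈ D → capIdeal 𝕜 D f = Ideal.span {xGamma 𝕜 f} := by
    intro hf
    apply le_antisymm
    · rw [hcap, Ideal.span_le]
      rintro Q ⟨s, ⟨h, hh, rfl⟩, rfl⟩
      rw [SetLike.mem_coe, Ideal.mem_span_singleton, hxg]
      exact monomial_one_dvd_monomial_one.2 (hle1 h)
    · rw [Ideal.span_le, Set.singleton_subset_iff]
      apply Ideal.subset_span
      refine ⟨f, hf, ?_⟩
      unfold xGamma
      apply Finset.prod_congr _ (fun _ _ => rfl)
      ext p
      simp [and_self_iff]
  refine ⟨⟨?_, fun hf => ⟨⟨xGamma 𝕜 f, part2 hf⟩⟩⟩, part2⟩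
  -- hard direction: principal → f ∈ D
  rintro ⟨P, hP⟩
  rw [Ideal.submodule_span_eq] at hP
  -- choose witnesses from fullness
  choose hc hcD hcval using fun u => hfull u (f u)
  -- each generator is divisible by P
  have hdvd : ∀ u : Fin n, P ∣ monomial (capInd (E (hc u))) (1 : 𝕜) := by
    intro u
    rw [← Ideal.mem_span_singleton, ← hP]
    rw [hcap]
    exact Ideal.subset_span ⟨capInd (E (hc u)), ⟨hc u, hcD u, rfl⟩, rfl⟩
  have hPne : P ≠ 0 := by
    rintro rfl
    obtain ⟨q, hq⟩ := hdvd ⟨0, hn⟩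
    rw [zero_mul] at hq
    exact one_ne_zero (monomial_eq_zero.1 hq)
  letI : LinearOrder (Fin n × Fin m) :=
    LinearOrder.lift' (Fintype.equivFin (Fin n × Fin m)) (Equiv.injective _)
  obtain ⟨t, htsupp, htmin⟩ := capMin_exp_le hPne
  have ht_le : ∀ u : Fin n, t ≤ capInd (E (hc u)) := by
    intro u
    obtain ⟨q, hq⟩ := hdvd u
    exact htmin q _ hq.symm
  have htσf : t ≤ capInd Gf := by
    intro p
    have h1 := ht_le p.1 p
    have h2 : capInd (E (hc p.1)) p = capInd Gf p := by
      rw [hE_apply, hGf_apply]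
      by_cases hfp : f p.1 = p.2
      · rw [if_pos hfp, if_pos ⟨hfp, by rw [hcval p.1, hfp]⟩]
      · rw [if_neg hfp, if_neg (fun hcon => hfp hcon.1)]
    rw [h2] at h1
    exact h1
  have hPmem : P ∈ capIdeal 𝕜 D f := by
    rw [hP]
    exact Ideal.mem_span_singleton_self P
  rw [hcap, mem_ideal_span_monomial_image] at hPmem
  obtain ⟨s', ⟨h', hh', rfl⟩, hs'le⟩ := hPmem t htsupp
  have : h' = f := hpinch h' t hs'le htσf
  rw [← this]
  exact hh'
end
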